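/- Let n ≥ 3 and let G be an n-ary group with multiplication μₙ, and fix an element e ∈ G with querelement ē. Define the binary operation g ∗ h := μₙ[g, e, …, e, ē, h] (with n−3 copies of e followed by ē inserted between g and h). Then ⟨G, ∗⟩ is a group with identity element e, in which the inverse of g is g⁻¹ = μₙ[e, g, …, g, ḡ, e] (with n−3 copies of g followed by the querelement ḡ between the two e's). -/

import Mathlib

/-- Total associativity of an `n`-ary operation `μ` given on lists: the composed
product of `2n-1` elements with one inner multiplication does not depend on the
position of the inner multiplication. -/
def TotAssoc {G : Type*} (n : ℕ) (μ : List G → G) : Prop :=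
  ∀ p₁ c₁ s₁ p₂ c₂ s₂ : List G,
    c₁.length = n → c₂.length = n →
    p₁.length + s₁.length = n - 1 → p₂.length + s₂.length = n - 1 →
    p₁ ++ c₁ ++ s₁ = p₂ ++ c₂ ++ s₂ →
    μ (p₁ ++ μ c₁ :: s₁) = μ (p₂ ++ μ c₂ :: s₂)

/-- Unique solvability of an `n`-ary operation in each place `i = 0,…,n-1`. -/
def UniqSolv {G : Type*} (n : ℕ) (μ : List G → G) : Prop :=
  ∀ (u : List G) (g : G), u.length = n - 1 →
    ∀ i ≤ n - 1, ∃! h : G, μ (u.take i ++ h :: u.drop i) = g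

/-- On an `n`-ary group (`n ≥ 3`) with querelement map `bar`,
for any fixed `e`, the binary operation `g ∗ h = μₙ[g, e^{n-3}, ē, h]` makes `G`
a group with identity `e`, in which the inverse of `g` is
`μₙ[e, g^{n-3}, ḡ, e]`. -/
theorem statement0 {G : Type*} (n : ℕ) (hn : 3 ≤ n)
    (μ : List G → G) (hassoc : TotAssoc n μ) (hsolv : UniqSolv n μ)
    (bar : G → G)
    (hbar : ∀ g : G, μ (List.replicate (n - 1) g ++ [bar g]) = g)
    (e : G)
    (st : G → G → G)
    (hst : ∀ g h : G, st g h = μ (g :: (List.replicate (n - 3) e ++ [bar e, h])))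
    (inv : G → G)
    (hinv : ∀ g : G, inv g = μ (e :: (List.replicate (n - 3) g ++ [bar g, e]))) :
    (∀ g h u : G, st (st g h) u = st g (st h u)) ∧
    (∀ g : G, st e g = g ∧ st g e = g) ∧
    (∀ g : G, st g (inv g) = e ∧ st (inv g) g = e) := by
  obtain ⟨m, rfl⟩ : ∃ m, n = m + 3 := ⟨n - 3, by omega⟩
  clear hn
  have h1 : m + 3 - 1 = m + 2 := rfl
  have h3 : m + 3 - 3 = m := by omega
  rw [h3] at hst hinv
  simp only [h1] at hbar
  have swap : ∀ (x : G) (a : ℕ) (l : List G),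
      x :: (List.replicate a x ++ l) = List.replicate a x ++ x :: l := by
    intro x a l
    rw [← List.cons_append, ← List.replicate_succ, List.replicate_succ',
      List.append_assoc, List.singleton_append]
  -- L1: Dörnte's identity μ(gᵃ, ḡ, gᵇ) = g whenever a + b = n - 1.
  have L1 : ∀ (g : G) (a b : ℕ), a + b = m + 2 →
      μ (List.replicate a g ++ bar g :: List.replicate b g) = g := by
    intro g a b hab
    have key := hassoc (List.replicate b g)
      (List.replicate a g ++ bar g :: List.replicate b g) (List.replicate a g)
      [] (List.replicate (m + 2) g ++ [bar g]) (List.replicate (m + 2) g)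
      (by simp only [List.length_append, List.length_replicate, List.length_cons, List.length_nil]; try omega)
      (by simp only [List.length_append, List.length_replicate, List.length_cons, List.length_nil]; try omega)
      (by simp only [List.length_replicate]; omega)
      (by simp only [List.length_replicate, List.length_nil]; try omega)
      (by rw [show m + 2 = b + a by omega]
          simp only [List.replicate_add, List.append_assoc, List.cons_append,
            List.nil_append, List.singleton_append])
    rw [hbar g, List.nil_append] at key
    have huniq := hsolv (List.replicate (m + 2) g) (μ (g :: List.replicate (m + 2) g))
      (by simp) b (by omega)
    simp only [List.take_replicate, List.drop_replicate] at huniq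
    rw [Nat.min_eq_left (by omega : b ≤ m + 2), show m + 2 - b = a by omega] at huniq
    obtain ⟨h, -, hu⟩ := huniq
    have e2 : μ (List.replicate b g ++ g :: List.replicate a g)
        = μ (g :: List.replicate (m + 2) g) := by
      congr 1
      rw [show (g :: List.replicate (m + 2) g) = List.replicate (m + 3) g from rfl,
        ← List.replicate_succ (a := g) (n := a), List.replicate_append_replicate,
        show b + (a + 1) = m + 3 by omega]
    exact (hu _ key).trans (hu g e2).symm
  -- L2: right neutrality  μ(x, gᵃ, ḡ, gᵇ) = x whenever a + b = n - 2.
  have L2 : ∀ (g x : G) (a b : ℕ), a + b = m + 1 →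
      μ (x :: (List.replicate a g ++ bar g :: List.replicate b g)) = x := by
    intro g x a b hab
    have key := hassoc []
      (x :: (List.replicate a g ++ bar g :: List.replicate b g)) (List.replicate (m + 2) g)
      [x] (List.replicate a g ++ bar g :: (List.replicate b g ++ [g])) (List.replicate (m + 1) g)
      (by simp only [List.length_append, List.length_replicate, List.length_cons, List.length_nil]; try omega)
      (by simp only [List.length_append, List.length_replicate, List.length_cons, List.length_nil]; try omega)
      (by simp only [List.length_replicate, List.length_nil]; try omega)
      (by simp only [List.length_replicate, List.length_cons, List.length_nil]; try omega)
      (by rw [show (m + 2) = (m + 1) + 1 from rfl, List.replicate_succ]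
          simp)
    rw [List.nil_append] at key
    have hc2 : μ (List.replicate a g ++ bar g :: (List.replicate b g ++ [g])) = g := by
      rw [show List.replicate b g ++ [g] = List.replicate (b + 1) g from
        (List.replicate_succ' (n := b) (a := g)).symm]
      exact L1 g a (b + 1) (by omega)
    rw [hc2] at key
    have huniq := hsolv (List.replicate (m + 2) g)
      (μ ([x] ++ g :: List.replicate (m + 1) g)) (by simp) 0 (by omega)
    simp only [List.take_zero, List.drop_zero, List.nil_append] at huniq
    obtain ⟨h, -, hu⟩ := huniq
    have e2 : μ (x :: List.replicate (m + 2) g) = μ ([x] ++ g :: List.replicate (m + 1) g) := by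
      congr 1
    exact (hu _ key).trans (hu x e2).symm
  -- L3: left neutrality  μ(gᵃ, ḡ, gᵇ, x) = x whenever a + b = n - 2.
  have L3 : ∀ (g x : G) (a b : ℕ), a + b = m + 1 →
      μ (List.replicate a g ++ bar g :: (List.replicate b g ++ [x])) = x := by
    intro g x a b hab
    have key := hassoc (List.replicate (m + 2) g)
      (List.replicate a g ++ bar g :: (List.replicate b g ++ [x])) []
      (List.replicate (m + 1) g)
      ((List.replicate a g ++ [g]) ++ bar g :: List.replicate b g) [x]
      (by simp only [List.length_append, List.length_replicate, List.length_cons,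
        List.length_nil]; try omega)
      (by simp only [List.length_append, List.length_replicate, List.length_cons,
        List.length_nil]; try omega)
      (by simp only [List.length_replicate, List.length_nil]; try omega)
      (by simp only [List.length_replicate, List.length_cons, List.length_nil]; try omega)
      (by rw [show (m + 2) = (m + 1) + 1 from rfl, List.replicate_succ' (n := m + 1) (a := g)]
          simp [swap])
    have hc2 : μ ((List.replicate a g ++ [g]) ++ bar g :: List.replicate b g) = g := by
      rw [show List.replicate a g ++ [g] = List.replicate (a + 1) g from
        (List.replicate_succ' (n := a) (a := g)).symm]
      exact L1 g (a + 1) b (by omega)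
    rw [hc2] at key
    have huniq := hsolv (List.replicate (m + 2) g)
      (μ (List.replicate (m + 1) g ++ g :: [x])) (by simp) (m + 2) (by omega)
    simp only [List.take_replicate, List.drop_replicate, Nat.min_self, Nat.sub_self,
      List.replicate_zero] at huniq
    obtain ⟨h, -, hu⟩ := huniq
    have e2 : μ (List.replicate (m + 2) g ++ x :: ([] : List G))
        = μ (List.replicate (m + 1) g ++ g :: [x]) := by
      congr 1
      rw [show (m + 2) = (m + 1) + 1 from rfl, List.replicate_succ' (n := m + 1) (a := g)]
      simp
    exact (hu _ key).trans (hu x e2).symm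
  -- associativity of ∗
  have hA : ∀ g h u : G, st (st g h) u = st g (st h u) := by
    intro g h u
    rw [hst g h, hst h u, hst, hst]
    have key := hassoc []
      (g :: (List.replicate m e ++ [bar e, h])) (List.replicate m e ++ [bar e, u])
      (g :: (List.replicate m e ++ [bar e])) (h :: (List.replicate m e ++ [bar e, u])) []
      (by simp only [List.length_append, List.length_replicate, List.length_cons, List.length_nil]; try omega)
      (by simp only [List.length_append, List.length_replicate, List.length_cons, List.length_nil]; try omega)
      (by simp only [List.length_append, List.length_replicate, List.length_cons,
        List.length_nil]; try omega)
      (by simp only [List.length_append, List.length_replicate, List.length_cons,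
        List.length_nil]; try omega)
      (by simp)
    rw [List.nil_append] at key
    refine key.trans ?_
    congr 1
    simp
  -- left identity
  have lid : ∀ g : G, st e g = g := by
    intro g
    rw [hst]
    have heq : e :: (List.replicate m e ++ [bar e, g])
        = List.replicate (m + 1) e ++ bar e :: (List.replicate 0 e ++ [g]) := by
      simp [List.replicate_succ]
    rw [heq]
    exact L3 e g (m + 1) 0 (by omega)
  -- right identity
  have rid : ∀ g : G, st g e = g := by
    intro g
    have huniq := hsolv (List.replicate m e ++ [bar e, e]) (st g e)
      (by simp only [List.length_append, List.length_replicate, List.length_cons,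
        List.length_nil]; try omega) 0 (by omega)
    simp only [List.take_zero, List.drop_zero, List.nil_append] at huniq
    obtain ⟨h, -, hu⟩ := huniq
    have s1 : st g e = h := by
      apply hu
      rw [← hst (st g e) e, hA, lid e]
    have s2 : g = h := hu g (hst g e).symm
    exact s1.trans s2.symm
  -- right inverse
  have rinv : ∀ g : G, st g (inv g) = e := by
    intro g
    rw [hst, hinv]
    have key := hassoc
      (g :: (List.replicate m e ++ [bar e])) (e :: (List.replicate m g ++ [bar g, e])) []
      [] (g :: (List.replicate m e ++ [bar e, e])) (List.replicate m g ++ [bar g, e])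
      (by simp only [List.length_append, List.length_replicate, List.length_cons, List.length_nil]; try omega)
      (by simp only [List.length_append, List.length_replicate, List.length_cons, List.length_nil]; try omega)
      (by simp only [List.length_append, List.length_replicate, List.length_cons,
        List.length_nil]; try omega)
      (by simp only [List.length_append, List.length_replicate, List.length_cons,
        List.length_nil]; try omega)
      (by simp)
    rw [← hst g e, rid g, List.nil_append] at key
    have e1 : g :: (List.replicate m e ++ [bar e, μ (e :: (List.replicate m g ++ [bar g, e]))])
        = (g :: (List.replicate m e ++ [bar e]))
          ++ μ (e :: (List.replicate m g ++ [bar g, e])) :: [] := by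
      simp
    rw [e1, key]
    have e2 : g :: (List.replicate m g ++ [bar g, e])
        = List.replicate (m + 1) g ++ bar g :: (List.replicate 0 g ++ [e]) := by
      simp [List.replicate_succ]
    rw [e2]
    exact L3 g e (m + 1) 0 (by omega)
  -- left inverse
  have linv : ∀ g : G, st (inv g) g = e := by
    intro g
    rw [hst, hinv]
    have key := hassoc []
      (e :: (List.replicate m g ++ [bar g, e])) (List.replicate m e ++ [bar e, g])
      (e :: (List.replicate m g ++ [bar g])) (e :: (List.replicate m e ++ [bar e, g])) []
      (by simp only [List.length_append, List.length_replicate, List.length_cons, List.length_nil]; try omega)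
      (by simp only [List.length_append, List.length_replicate, List.length_cons, List.length_nil]; try omega)
      (by simp only [List.length_append, List.length_replicate, List.length_cons,
        List.length_nil]; try omega)
      (by simp only [List.length_append, List.length_replicate, List.length_cons,
        List.length_nil]; try omega)
      (by simp)
    rw [← hst e g, lid g, List.nil_append] at key
    rw [key]
    have e2 : (e :: (List.replicate m g ++ [bar g])) ++ g :: []
        = e :: (List.replicate m g ++ bar g :: List.replicate 1 g) := by
      simp
    rw [e2]
    exact L2 g e m 1 (by omega)
  exact ⟨hA, fun g => ⟨lid g, rid g⟩, fun g => ⟨rinv g, linv g⟩⟩
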